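/- For φ ∈ ℝ with sin 2φ ≠ 0 and cos 2φ ≠ 0, set w₁ = (sin φ/√2, −sin φ/√2, −cos φ/√2, cos φ/√2), w₂ = (−1/2, −1/2, 1/2, 1/2) ∈ ℝ⁴, and α_{jk}(φ) = (w₁ʲ − w₁ᵏ)² + (w₂ʲ − w₂ᵏ)². Then with ρ_{jk}(φ) = 1/(qⱼ(φ) − qₖ(φ)): α₁₂ = 1/ρ₃₄², α₃₄ = 1/ρ₁₂², α₁₃ = α₂₄ = 1/ρ₁₄² + 1, and α₁₄ = α₂₃ = 1/ρ₁₃² + 1. -/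
import Mathlib


open Complex

/-- The collinear equal-mass four-body configuration with `θ = π/2`:
`q(φ) = (cos φ/√2, −cos φ/√2, sin φ/√2, −sin φ/√2)`. -/
noncomputable def qcfg (φ : ℝ) : Fin 4 → ℝ :=
  ![Real.cos φ / Real.sqrt 2, -(Real.cos φ) / Real.sqrt 2,
    Real.sin φ / Real.sqrt 2, -(Real.sin φ) / Real.sqrt 2]

/-- `ρ_{jk}(φ) = 1/(qⱼ(φ) − qₖ(φ))`. -/
noncomputable def ρ (φ : ℝ) (j k : Fin 4) : ℝ := 1 / (qcfg φ j - qcfg φ k)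

/-- `w₁ = (sin φ/√2, −sin φ/√2, −cos φ/√2, cos φ/√2)`. -/
noncomputable def w1 (φ : ℝ) : Fin 4 → ℝ :=
  ![Real.sin φ / Real.sqrt 2, -(Real.sin φ) / Real.sqrt 2,
    -(Real.cos φ) / Real.sqrt 2, Real.cos φ / Real.sqrt 2]

/-- `w₂ = (−1/2, −1/2, 1/2, 1/2)`. -/
noncomputable def w2 : Fin 4 → ℝ := ![-(1 / 2), -(1 / 2), 1 / 2, 1 / 2]

/-- `α_{jk}(φ) = (w₁ʲ − w₁ᵏ)² + (w₂ʲ − w₂ᵏ)²`. -/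
noncomputable def alph (φ : ℝ) (j k : Fin 4) : ℝ :=
  (w1 φ j - w1 φ k) ^ 2 + (w2 j - w2 k) ^ 2

/-- The identities `α₁₂ = 1/ρ₃₄²`, `α₃₄ = 1/ρ₁₂²`, `α₁₃ = α₂₄ = 1/ρ₁₄² + 1` and
`α₁₄ = α₂₃ = 1/ρ₁₃² + 1`.  (Bodies are indexed `0,1,2,3`.) -/
theorem alpha_identities (φ : ℝ)
    (hs : Real.sin (2 * φ) ≠ 0) (hc : Real.cos (2 * φ) ≠ 0) :
    alph φ 0 1 = 1 / (ρ φ 2 3) ^ 2 ∧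
    alph φ 2 3 = 1 / (ρ φ 0 1) ^ 2 ∧
    alph φ 0 2 = 1 / (ρ φ 0 3) ^ 2 + 1 ∧
    alph φ 1 3 = 1 / (ρ φ 0 3) ^ 2 + 1 ∧
    alph φ 0 3 = 1 / (ρ φ 0 2) ^ 2 + 1 ∧
    alph φ 1 2 = 1 / (ρ φ 0 2) ^ 2 + 1 := by
  have h2 : Real.sqrt 2 ^ 2 = 2 := Real.sq_sqrt (by norm_num)
  have h2' : Real.sqrt 2 ≠ 0 := by positivity
  have key : ∀ x : ℝ, 1 / (1 / x) ^ 2 = x ^ 2 := by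
    intro x; rw [div_pow, one_pow, one_div_one_div]
  have pyth := Real.sin_sq_add_cos_sq φ
  simp only [alph, w1, w2, ρ, qcfg, key, Matrix.cons_val_zero, Matrix.cons_val_one,
    Matrix.head_cons, Matrix.cons_val_two, Matrix.tail_cons, Matrix.cons_val_three]
  refine ⟨?_, ?_, ?_, ?_, ?_, ?_⟩ <;> field_simp <;> nlinarith [pyth, h2]
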